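/- Let E be the elliptic curve over ℂ(u) defined by Y² = X³ + u⁵(u − 1)². Then the group of ℂ(u)-rational points of E is trivial: the point at infinity O is the only ℂ(u)-rational point. (Equivalently, the Mordell-Weil group of Fibration 1 on the singular K3 surface X₃ is 0.) -/

import Mathlib

open WeierstrassCurve

/-- The parameter `u` of the base `ℙ¹`, as an element of `ℂ(u)`. -/
noncomputable def uu : RatFunc ℂ := RatFunc.X

/-- Fibration 1: the elliptic curve `Y² = X³ + u⁵(u − 1)²` over `ℂ(u)`. -/
noncomputable def W1 : WeierstrassCurve.Affine (RatFunc ℂ) :=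
  { a₁ := 0, a₂ := 0, a₃ := 0, a₄ := 0, a₆ := uu ^ 5 * (uu - 1) ^ 2 }

open Polynomial UniqueFactorizationMonoid UniqueFactorizationDomain

namespace MW1Aux


lemma radical_dvd_radical_of_dvd {a b : Polynomial ℂ} (h : a ∣ b) (ha : a ≠ 0) (hb : b ≠ 0) :
    radical a ∣ radical b := by
  have hsub : primeFactors a ⊆ primeFactors b := by
    intro π hπ
    unfold UniqueFactorizationMonoid.primeFactors at hπ ⊢
    exact (@Multiset.mem_toFinset _ (fun a b => Classical.propDecidable (a = b)) _ _).mpr (Multiset.mem_of_le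
      ((dvd_iff_normalizedFactors_le_normalizedFactors ha hb).1 h)
      ((@Multiset.mem_toFinset _ (fun a b => Classical.propDecidable (a = b)) _ _).mp hπ))
  exact Finset.prod_dvd_prod_of_subset _ _ id hsub

lemma natDegree_radical_le_of_dvd_pow {a M : Polynomial ℂ} {n : ℕ} (hn : 0 < n)
    (h : a ∣ M ^ n) (ha : a ≠ 0) (hM : M ≠ 0) :
    (radical a).natDegree ≤ M.natDegree := by
  have h1 : radical a ∣ radical (M ^ n) :=
    radical_dvd_radical_of_dvd h ha (pow_ne_zero _ hM)
  rw [radical_pow M hn.ne'] at h1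
  exact natDegree_le_of_dvd (h1.trans (radical_dvd_self (a := M))) hM

lemma prime_X_sub_one : Prime (X - 1 : Polynomial ℂ) := by
  have h : (X - 1 : Polynomial ℂ) = X - C 1 := by rw [map_one]
  rw [h]
  exact prime_X_sub_C 1

lemma key (p B r : Polynomial ℂ) (hB : B ≠ 0) (hcop : IsCoprime p B)
    (heq : r ^ 2 = p ^ 3 + X ^ 5 * (X - 1) ^ 2 * B ^ 6) : False := by
  have hX1 : (X - 1 : Polynomial ℂ) ≠ 0 := prime_X_sub_one.ne_zero
  have hXne : (X : Polynomial ℂ) ≠ 0 := X_ne_zero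
  have hX1deg : (X - 1 : Polynomial ℂ).natDegree = 1 := by
    rw [show (X - 1 : Polynomial ℂ) = X - C 1 by rw [map_one]]
    exact natDegree_X_sub_C 1
  have hCB0 : (X ^ 5 * (X - 1) ^ 2 : Polynomial ℂ) ≠ 0 :=
    mul_ne_zero (pow_ne_zero _ hXne) (pow_ne_zero _ hX1)
  have hCB : (X ^ 5 * (X - 1) ^ 2 * B ^ 6 : Polynomial ℂ) ≠ 0 :=
    mul_ne_zero hCB0 (pow_ne_zero _ hB)
  have hCBdeg : (X ^ 5 * (X - 1) ^ 2 * B ^ 6 : Polynomial ℂ).natDegree = 7 + 6 * B.natDegree := by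
    rw [natDegree_mul hCB0 (pow_ne_zero _ hB),
      natDegree_mul (pow_ne_zero _ hXne) (pow_ne_zero _ hX1),
      natDegree_pow, natDegree_pow, natDegree_pow, natDegree_X, hX1deg]
  -- p is nonzero
  have hp : p ≠ 0 := by
    rintro rfl
    rw [zero_pow (by norm_num : (3:ℕ) ≠ 0), zero_add] at heq
    have hr0 : r ≠ 0 := by
      rintro rfl
      rw [zero_pow (by norm_num : (2:ℕ) ≠ 0)] at heq
      exact hCB heq.symm
    have h2 := congrArg natDegree heq
    rw [natDegree_pow, hCBdeg] at h2
    omega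
  -- r is nonzero
  have hr : r ≠ 0 := by
    rintro rfl
    have h3 : p ^ 3 = -(X ^ 5 * (X - 1) ^ 2 * B ^ 6) := by linear_combination -heq
    have h2 := congrArg natDegree h3
    rw [natDegree_pow, natDegree_neg, hCBdeg] at h2
    omega
  -- degree comparison
  have hmain : 2 * r.natDegree = 3 * p.natDegree ∧
      3 * p.natDegree ≥ 7 + 6 * B.natDegree + 1 := by
    rcases lt_trichotomy (3 * p.natDegree) (7 + 6 * B.natDegree) with hlt | heqq | hgt
    · exfalso
      have hd : (p ^ 3 + X ^ 5 * (X - 1) ^ 2 * B ^ 6).natDegree = 7 + 6 * B.natDegree := by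
        rw [natDegree_add_eq_right_of_natDegree_lt, hCBdeg]
        rw [natDegree_pow, hCBdeg]; omega
      have h2 := congrArg natDegree heq
      rw [natDegree_pow, hd] at h2
      omega
    · omega
    · refine ⟨?_, by omega⟩
      have hd : (p ^ 3 + X ^ 5 * (X - 1) ^ 2 * B ^ 6).natDegree = 3 * p.natDegree := by
        rw [natDegree_add_eq_left_of_natDegree_lt, natDegree_pow]
        rw [natDegree_pow, hCBdeg]; omega
      have h2 := congrArg natDegree heq
      rw [natDegree_pow, hd] at h2
      omega
  obtain ⟨hρ, hge⟩ := hmain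
  -- X does not divide p
  have hXp : ¬ (X : Polynomial ℂ) ∣ p := by
    rintro ⟨p₁, hp₁⟩
    have hXB : ¬ (X : Polynomial ℂ) ∣ B := by
      intro hd
      exact Polynomial.not_isUnit_X
        ((hcop.of_isCoprime_of_dvd_left ⟨p₁, hp₁⟩).isUnit_of_dvd' dvd_rfl hd)
    obtain ⟨r₁, hr₁⟩ : (X : Polynomial ℂ) ∣ r := by
      refine prime_X.dvd_of_dvd_pow (n := 2) ⟨X ^ 2 * p₁ ^ 3 + X ^ 4 * (X - 1) ^ 2 * B ^ 6, ?_⟩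
      rw [hp₁] at heq; linear_combination heq
    have e2 : r₁ ^ 2 = X * p₁ ^ 3 + X ^ 3 * (X - 1) ^ 2 * B ^ 6 := by
      refine mul_left_cancel₀ (pow_ne_zero 2 hXne) ?_
      rw [hp₁, hr₁] at heq; linear_combination heq
    obtain ⟨r₂, hr₂⟩ : (X : Polynomial ℂ) ∣ r₁ := by
      exact prime_X.dvd_of_dvd_pow (n := 2) ⟨p₁ ^ 3 + X ^ 2 * (X - 1) ^ 2 * B ^ 6, by
        linear_combination e2⟩
    have e3 : X * r₂ ^ 2 = p₁ ^ 3 + X ^ 2 * (X - 1) ^ 2 * B ^ 6 := by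
      refine mul_left_cancel₀ hXne ?_
      rw [hr₂] at e2; linear_combination e2
    obtain ⟨p₂, hp₂⟩ : (X : Polynomial ℂ) ∣ p₁ := by
      exact prime_X.dvd_of_dvd_pow (n := 3) ⟨r₂ ^ 2 - X * (X - 1) ^ 2 * B ^ 6, by
        linear_combination -e3⟩
    have e4 : r₂ ^ 2 = X ^ 2 * p₂ ^ 3 + X * (X - 1) ^ 2 * B ^ 6 := by
      refine mul_left_cancel₀ hXne ?_
      rw [hp₂] at e3; linear_combination e3
    obtain ⟨r₃, hr₃⟩ : (X : Polynomial ℂ) ∣ r₂ := by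
      exact prime_X.dvd_of_dvd_pow (n := 2) ⟨X * p₂ ^ 3 + (X - 1) ^ 2 * B ^ 6, by
        linear_combination e4⟩
    have e5 : X * r₃ ^ 2 = X * p₂ ^ 3 + (X - 1) ^ 2 * B ^ 6 := by
      refine mul_left_cancel₀ hXne ?_
      rw [hr₃] at e4; linear_combination e4
    have hXd : (X : Polynomial ℂ) ∣ (X - 1) ^ 2 * B ^ 6 := ⟨r₃ ^ 2 - p₂ ^ 3, by
      linear_combination -e5⟩
    rcases prime_X.dvd_mul.mp hXd with h | h
    · have : (X : Polynomial ℂ) ∣ X - 1 := prime_X.dvd_of_dvd_pow h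
      have h2 : (X : Polynomial ℂ) ∣ X - (X - 1) := dvd_sub dvd_rfl this
      rw [show (X : Polynomial ℂ) - (X - 1) = 1 by ring] at h2
      exact Polynomial.not_isUnit_X (isUnit_of_dvd_one h2)
    · exact hXB (prime_X.dvd_of_dvd_pow h)
  have hpu : IsCoprime (X : Polynomial ℂ) p := prime_X.coprime_iff_not_dvd.mpr hXp
  have hXw1 : IsCoprime (X : Polynomial ℂ) (X - 1) := ⟨1, -1, by ring⟩
  by_cases hw : (X - 1 : Polynomial ℂ) ∣ p
  · -- Case B : (X-1) ∣ p
    obtain ⟨p', hp'⟩ := hw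
    have hw1B : IsCoprime (X - 1 : Polynomial ℂ) B :=
      hcop.of_isCoprime_of_dvd_left ⟨p', hp'⟩
    obtain ⟨r', hr'⟩ : (X - 1 : Polynomial ℂ) ∣ r := by
      refine prime_X_sub_one.dvd_of_dvd_pow (n := 2)
        ⟨(X - 1) ^ 2 * p' ^ 3 + X ^ 5 * (X - 1) * B ^ 6, ?_⟩
      rw [hp'] at heq; linear_combination heq
    have e : r' ^ 2 = (X - 1) * p' ^ 3 + X ^ 5 * B ^ 6 := by
      refine mul_left_cancel₀ (pow_ne_zero 2 hX1) ?_
      rw [hp', hr'] at heq; linear_combination heq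
    have hp'0 : p' ≠ 0 := by rintro rfl; rw [mul_zero] at hp'; exact hp hp'
    have hr'0 : r' ≠ 0 := by rintro rfl; rw [mul_zero] at hr'; exact hr hr'
    have hadeg : p.natDegree = 1 + p'.natDegree := by
      rw [hp', natDegree_mul hX1 hp'0, hX1deg]
    have hρdeg : r.natDegree = 1 + r'.natDegree := by
      rw [hr', natDegree_mul hX1 hr'0, hX1deg]
    have hp'p : p' ∣ p := ⟨X - 1, by rw [hp']; ring⟩
    have hup' : IsCoprime (X : Polynomial ℂ) p' :=
      prime_X.coprime_iff_not_dvd.mpr (fun hd => hXp (hd.trans hp'p))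
    have hp'B : IsCoprime p' B := hcop.of_isCoprime_of_dvd_left hp'p
    have hf0 : ((X - 1) * p' ^ 3 : Polynomial ℂ) ≠ 0 := mul_ne_zero hX1 (pow_ne_zero _ hp'0)
    have hg0 : (X ^ 5 * B ^ 6 : Polynomial ℂ) ≠ 0 :=
      mul_ne_zero (pow_ne_zero _ hXne) (pow_ne_zero _ hB)
    have hgdeg : (X ^ 5 * B ^ 6 : Polynomial ℂ).natDegree = 5 + 6 * B.natDegree := by
      rw [natDegree_mul (pow_ne_zero _ hXne) (pow_ne_zero _ hB),
        natDegree_pow, natDegree_pow, natDegree_X]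
    have hfdeg : ((X - 1) * p' ^ 3 : Polynomial ℂ).natDegree = 1 + 3 * p'.natDegree := by
      rw [natDegree_mul hX1 (pow_ne_zero _ hp'0), hX1deg, natDegree_pow]
    have hfg : IsCoprime ((X - 1) * p' ^ 3) (X ^ 5 * B ^ 6 : Polynomial ℂ) := by
      refine IsCoprime.mul_left ?_ ?_
      · exact (hXw1.symm.pow_right).mul_right (hw1B.pow_right)
      · exact ((hup'.symm.pow_right).mul_right (hp'B.pow_right)).pow_left
    have hsum : (X - 1) * p' ^ 3 + X ^ 5 * B ^ 6 + -(r' ^ 2) = 0 := by linear_combination -e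
    have hbc : IsCoprime (X ^ 5 * B ^ 6 : Polynomial ℂ) (-(r' ^ 2)) := by
      have h1 := hfg.symm.add_mul_left_right 1
      rw [mul_one] at h1
      rw [e.symm] at h1
      exact h1.neg_right
    have hca : IsCoprime (-(r' ^ 2)) ((X - 1) * p' ^ 3 : Polynomial ℂ) := by
      have h1 := hfg.add_mul_left_right 1
      rw [mul_one] at h1
      have h2 : X ^ 5 * B ^ 6 + (X - 1) * p' ^ 3 = r' ^ 2 := by linear_combination -e
      rw [h2] at h1
      exact h1.neg_right.symm
    rcases Polynomial.abc hf0 hg0 (neg_ne_zero.mpr (pow_ne_zero 2 hr'0)) hfg hsum with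
      ⟨h1, -, -⟩ | ⟨-, hd, -⟩
    · have hNeq : (X - 1) * p' ^ 3 * (X ^ 5 * B ^ 6) * -(r' ^ 2)
          = -((X - 1) * p' ^ 3 * (X ^ 5 * B ^ 6) * r' ^ 2) := by ring
      rw [hNeq, radical_neg] at h1
      have hdvd : (X - 1) * p' ^ 3 * (X ^ 5 * B ^ 6) * r' ^ 2
          ∣ (X * (X - 1) * p' * B * r') ^ 6 := ⟨X * (X - 1) ^ 5 * p' ^ 3 * r' ^ 4, by ring⟩
      have hM0 : (X * (X - 1) * p' * B * r' : Polynomial ℂ) ≠ 0 :=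
        mul_ne_zero (mul_ne_zero (mul_ne_zero (mul_ne_zero hXne hX1) hp'0) hB) hr'0
      have hMdeg : (X * (X - 1) * p' * B * r' : Polynomial ℂ).natDegree
          = 2 + p'.natDegree + B.natDegree + r'.natDegree := by
        rw [natDegree_mul (mul_ne_zero (mul_ne_zero (mul_ne_zero hXne hX1) hp'0) hB) hr'0,
          natDegree_mul (mul_ne_zero (mul_ne_zero hXne hX1) hp'0) hB,
          natDegree_mul (mul_ne_zero hXne hX1) hp'0,
          natDegree_mul hXne hX1, natDegree_X, hX1deg]
      have hbound := natDegree_radical_le_of_dvd_pow (by norm_num) hdvd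
        (mul_ne_zero (mul_ne_zero hf0 hg0) (pow_ne_zero _ hr'0)) hM0
      rw [hMdeg] at hbound
      rw [hfdeg] at h1
      omega
    · have := natDegree_eq_zero_of_derivative_eq_zero hd
      rw [hgdeg] at this
      omega
  · -- Case A : (X-1) does not divide p
    have hpw : IsCoprime (X - 1 : Polynomial ℂ) p := prime_X_sub_one.coprime_iff_not_dvd.mpr hw
    have hfg : IsCoprime (p ^ 3) (X ^ 5 * (X - 1) ^ 2 * B ^ 6 : Polynomial ℂ) := by
      refine IsCoprime.pow_left ?_
      exact ((hpu.symm.pow_right).mul_right (hpw.symm.pow_right)).mul_right (hcop.pow_right)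
    have hsum : p ^ 3 + X ^ 5 * (X - 1) ^ 2 * B ^ 6 + -(r ^ 2) = 0 := by linear_combination -heq
    have hbc : IsCoprime (X ^ 5 * (X - 1) ^ 2 * B ^ 6 : Polynomial ℂ) (-(r ^ 2)) := by
      have h1 := hfg.symm.add_mul_left_right 1
      rw [mul_one] at h1
      rw [heq.symm] at h1
      exact h1.neg_right
    have hca : IsCoprime (-(r ^ 2)) (p ^ 3 : Polynomial ℂ) := by
      have h1 := hfg.add_mul_left_right 1
      rw [mul_one] at h1
      have h2 : X ^ 5 * (X - 1) ^ 2 * B ^ 6 + p ^ 3 = r ^ 2 := by linear_combination -heq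
      rw [h2] at h1
      exact h1.neg_right.symm
    rcases Polynomial.abc (pow_ne_zero 3 hp) hCB (neg_ne_zero.mpr (pow_ne_zero 2 hr)) hfg
      hsum with ⟨h1, -, -⟩ | ⟨-, hd, -⟩
    · have hNeq : p ^ 3 * (X ^ 5 * (X - 1) ^ 2 * B ^ 6) * -(r ^ 2)
          = -(p ^ 3 * (X ^ 5 * (X - 1) ^ 2 * B ^ 6) * r ^ 2) := by ring
      rw [hNeq, radical_neg] at h1
      have hdvd : p ^ 3 * (X ^ 5 * (X - 1) ^ 2 * B ^ 6) * r ^ 2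
          ∣ (X * (X - 1) * p * B * r) ^ 6 := ⟨X * (X - 1) ^ 4 * p ^ 3 * r ^ 4, by ring⟩
      have hM0 : (X * (X - 1) * p * B * r : Polynomial ℂ) ≠ 0 :=
        mul_ne_zero (mul_ne_zero (mul_ne_zero (mul_ne_zero hXne hX1) hp) hB) hr
      have hMdeg : (X * (X - 1) * p * B * r : Polynomial ℂ).natDegree
          = 2 + p.natDegree + B.natDegree + r.natDegree := by
        rw [natDegree_mul (mul_ne_zero (mul_ne_zero (mul_ne_zero hXne hX1) hp) hB) hr,
          natDegree_mul (mul_ne_zero (mul_ne_zero hXne hX1) hp) hB,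
          natDegree_mul (mul_ne_zero hXne hX1) hp,
          natDegree_mul hXne hX1, natDegree_X, hX1deg]
      have hbound := natDegree_radical_le_of_dvd_pow (by norm_num) hdvd
        (mul_ne_zero (mul_ne_zero (pow_ne_zero _ hp) hCB) (pow_ne_zero _ hr)) hM0
      rw [hMdeg] at hbound
      rw [natDegree_pow] at h1
      omega
    · have := natDegree_eq_zero_of_derivative_eq_zero hd
      rw [hCBdeg] at this
      omega


lemma no_point (x y : RatFunc ℂ)
    (h : y ^ 2 = x ^ 3 + RatFunc.X ^ 5 * (RatFunc.X - 1) ^ 2) : False := by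
  have hinj : Function.Injective (algebraMap (Polynomial ℂ) (RatFunc ℂ)) :=
    RatFunc.algebraMap_injective ℂ
  have hq0 : x.denom ≠ 0 := x.denom_ne_zero
  have hs0 : y.denom ≠ 0 := y.denom_ne_zero
  have hφq : algebraMap (Polynomial ℂ) (RatFunc ℂ) x.denom ≠ 0 :=
    fun h0 => hq0 (hinj (by rw [h0, map_zero]))
  have hφs : algebraMap (Polynomial ℂ) (RatFunc ℂ) y.denom ≠ 0 :=
    fun h0 => hs0 (hinj (by rw [h0, map_zero]))
  have hx : algebraMap (Polynomial ℂ) (RatFunc ℂ) x.num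
      = x * algebraMap (Polynomial ℂ) (RatFunc ℂ) x.denom :=
    (div_eq_iff hφq).mp (RatFunc.num_div_denom x)
  have hy : algebraMap (Polynomial ℂ) (RatFunc ℂ) y.num
      = y * algebraMap (Polynomial ℂ) (RatFunc ℂ) y.denom :=
    (div_eq_iff hφs).mp (RatFunc.num_div_denom y)
  have main : y.num ^ 2 * x.denom ^ 3
      = y.denom ^ 2 * (x.num ^ 3 + X ^ 5 * (X - 1) ^ 2 * x.denom ^ 3) := by
    apply hinj
    simp only [map_mul, map_pow, map_add, map_sub, map_one, RatFunc.algebraMap_X]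
    rw [hx, hy]
    linear_combination (algebraMap (Polynomial ℂ) (RatFunc ℂ) y.denom) ^ 2 *
      (algebraMap (Polynomial ℂ) (RatFunc ℂ) x.denom) ^ 3 * h
  have hcq : IsCoprime x.num x.denom := x.isCoprime_num_denom
  have hcs : IsCoprime y.num y.denom := y.isCoprime_num_denom
  have hsq : y.denom ^ 2 ∣ x.denom ^ 3 :=
    (hcs.symm.pow (m := 2) (n := 2)).dvd_of_dvd_mul_left
      ⟨x.num ^ 3 + X ^ 5 * (X - 1) ^ 2 * x.denom ^ 3, main⟩
  have hqs : x.denom ^ 3 ∣ y.denom ^ 2 := by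
    refine (hcq.symm.pow (m := 3) (n := 3)).dvd_of_dvd_mul_left
      ⟨y.num ^ 2 - X ^ 5 * (X - 1) ^ 2 * y.denom ^ 2, ?_⟩
    linear_combination -main
  have hqs_eq : x.denom ^ 3 = y.denom ^ 2 :=
    eq_of_monic_of_associated ((x.monic_denom).pow 3) ((y.monic_denom).pow 2)
      (associated_of_dvd_dvd hqs hsq)
  have hmain2 : y.num ^ 2 = x.num ^ 3 + X ^ 5 * (X - 1) ^ 2 * x.denom ^ 3 := by
    refine mul_left_cancel₀ (pow_ne_zero 3 hq0) ?_
    rw [← hqs_eq] at main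
    linear_combination main
  have ht2 : (algebraMap (Polynomial ℂ) (RatFunc ℂ) y.denom
      / algebraMap (Polynomial ℂ) (RatFunc ℂ) x.denom) ^ 2
      = algebraMap (Polynomial ℂ) (RatFunc ℂ) x.denom := by
    rw [div_pow, div_eq_iff (pow_ne_zero 2 hφq), ← map_pow, ← map_pow, ← map_mul]
    exact congrArg _ (by rw [← hqs_eq]; ring)
  have hint : IsIntegral (Polynomial ℂ)
      (algebraMap (Polynomial ℂ) (RatFunc ℂ) y.denom
        / algebraMap (Polynomial ℂ) (RatFunc ℂ) x.denom) := by
    refine ⟨X ^ 2 - C x.denom, monic_X_pow_sub_C _ (by norm_num), ?_⟩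
    simp only [eval₂_sub, eval₂_X_pow, eval₂_C]
    rw [ht2]
    exact sub_self _
  obtain ⟨BB, hBB⟩ := IsIntegrallyClosed.isIntegral_iff.mp hint
  have hBq : BB ^ 2 = x.denom := hinj (by rw [map_pow, hBB, ht2])
  have hBne : BB ≠ 0 := by
    intro h0
    rw [h0] at hBq
    exact hq0 (by rw [← hBq, zero_pow (by norm_num : (2:ℕ) ≠ 0)])
  have hcopB : IsCoprime x.num BB :=
    hcq.of_isCoprime_of_dvd_right (by rw [← hBq]; exact dvd_pow_self BB two_ne_zero)
  refine key x.num BB y.num hBne hcopB ?_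
  rw [hmain2, ← hBq]
  ring


end MW1Aux

/-- The Mordell-Weil group of Fibration 1 on the singular K3 surface `X₃` is
trivial: the point at infinity `O` is the only `ℂ(u)`-rational point of the
elliptic curve `Y² = X³ + u⁵(u − 1)²`. -/
theorem fibration1_mordell_weil :
    ∀ P : W1.Point, P = 0 := by
  rintro (_ | @⟨x, y, hxy⟩)
  · rfl
  · exfalso
    have heq := (WeierstrassCurve.Affine.equation_iff (W := W1) x y).mp hxy.left
    have ha1 : W1.a₁ = 0 := rfl
    have ha2 : W1.a₂ = 0 := rfl
    have ha3 : W1.a₃ = 0 := rfl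
    have ha4 : W1.a₄ = 0 := rfl
    have ha6 : W1.a₆ = RatFunc.X ^ 5 * (RatFunc.X - 1) ^ 2 := rfl
    rw [ha1, ha2, ha3, ha4, ha6] at heq
    exact MW1Aux.no_point x y (by linear_combination heq)
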